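/- For words w of length n over the alphabet {0,1,...,k-1}, the identity sum over n >= 0 of z^n * (sum over w in {0,...,k-1}^n of x^{des(w)} q^{sum(w)}) = (x-1)/(x - (z - zx; q)_k) holds as formal power series, where (a; q)_k = product over i from 0 to k-1 of (1 - a q^i), des(w) is the number of indices i with w_i > w_{i+1}, and sum(w) is the sum of the letters of w. -/

import Mathlib

/-- The number of descents of a word `w = w₀ w₁ ⋯ w_{n-1}`: positions `i` with
`wᵢ > w_{i+1}`. -/
noncomputable def wordDes {n k : ℕ} (w : Fin n → Fin k) : ℕ :=
  Nat.card {i : Fin n // ∃ h : (i : ℕ) + 1 < n, w ⟨(i : ℕ) + 1, h⟩ < w i}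

/-- The sum of the letters of a word. -/
def wordSum {n k : ℕ} (w : Fin n → Fin k) : ℕ := ∑ i, (w i : ℕ)

noncomputable abbrev xvar : MvPolynomial (Fin 2) ℤ := MvPolynomial.X 0
noncomputable abbrev qvar : MvPolynomial (Fin 2) ℤ := MvPolynomial.X 1

namespace WordGF
open Finset MvPolynomial

abbrev R := MvPolynomial (Fin 2) ℤ

variable {k : ℕ}

/-- descents of a list -/
def ldes : List (Fin k) → ℕ
  | a :: b :: t => (if b < a then 1 else 0) + ldes (b :: t)
  | _ => 0

@[simp] lemma ldes_nil : ldes ([] : List (Fin k)) = 0 := rfl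
@[simp] lemma ldes_singleton (a : Fin k) : ldes [a] = 0 := rfl
@[simp] lemma ldes_cons_cons (a b : Fin k) (t : List (Fin k)) :
    ldes (a :: b :: t) = (if b < a then 1 else 0) + ldes (b :: t) := rfl

/-- sum of the values of a list -/
def lsum (l : List (Fin k)) : ℕ := (l.map Fin.val).sum

/-- strictly decreasing lists -/
def Dec (l : List (Fin k)) : Prop := l.Chain' (· > ·)

instance : DecidablePred (Dec (k := k)) := fun l => by unfold Dec List.Chain'; infer_instance

@[simp] lemma dec_nil : Dec ([] : List (Fin k)) := List.isChain_nil
@[simp] lemma dec_singleton (a : Fin k) : Dec [a] := List.isChain_singleton a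

lemma dec_cons_cons (a b : Fin k) (t : List (Fin k)) :
    Dec (a :: b :: t) ↔ b < a ∧ Dec (b :: t) := List.isChain_cons_cons

/-- The key telescoping fiber computation. -/
lemma fiber (t : List (Fin k)) : ∀ a : Fin k,
    ∑ i ∈ range (a :: t).length,
      (if Dec ((a :: t).take (i+1)) then (xvar - 1)^i * xvar ^ ldes ((a :: t).drop (i+1)) else 0)
      = xvar ^ ldes (a :: t) := by
  induction t with
  | nil => intro a; simp
  | cons b t' ih =>
    intro a
    rw [show (a :: b :: t').length = (b :: t').length + 1 from rfl, Finset.sum_range_succ']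
    have ihb := ih b
    simp only [List.take_succ_cons, List.drop_succ_cons, List.take_zero, List.drop_zero,
      pow_zero, one_mul, List.length_cons, dec_singleton, if_true] at ihb ⊢
    by_cases hb : b < a
    · have hc : ∀ i ∈ range (t'.length + 1),
          (if Dec (a :: b :: t'.take i) then (xvar-1)^(i+1) * xvar ^ ldes (t'.drop i) else 0)
          = (xvar - 1) * (if Dec (b :: t'.take i) then (xvar-1)^i * xvar ^ ldes (t'.drop i) else 0) := by
        intro i _
        by_cases hd : Dec (b :: t'.take i) <;>
          simp [dec_cons_cons, hd, hb, pow_succ] <;> ring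
      rw [Finset.sum_congr rfl hc, ← Finset.mul_sum, ihb]
      simp [hb]
      ring
    · have hc : ∀ i ∈ range (t'.length + 1),
          (if Dec (a :: b :: t'.take i) then (xvar-1)^(i+1) * xvar ^ ldes (t'.drop i) else 0)
          = 0 := by
        intro i _
        simp [dec_cons_cons, hb]
      rw [Finset.sum_congr rfl hc]
      simp [hb]

/-- the finset of all lists of length `n` over `Fin k` -/
def W (k n : ℕ) : Finset (List (Fin k)) :=
  (Finset.univ : Finset (Fin n → Fin k)).image List.ofFn

lemma mem_W {n : ℕ} {l : List (Fin k)} : l ∈ W k n ↔ l.length = n := by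
  constructor
  · rintro hl
    obtain ⟨w, -, rfl⟩ := Finset.mem_image.1 hl
    simp
  · intro hl
    refine Finset.mem_image.2 ⟨fun i => l.get (Fin.cast hl.symm i), Finset.mem_univ _, ?_⟩
    apply List.ext_getElem (by simp [hl])
    intro i h1 h2
    simp

lemma sum_W_eq {M : Type*} [AddCommMonoid M] (n : ℕ) (f : List (Fin k) → M) :
    ∑ l ∈ W k n, f l = ∑ w : Fin n → Fin k, f (List.ofFn w) := by
  rw [W]; exact Finset.sum_image (fun a _ b _ h => List.ofFn_injective h)

lemma wordDes_card {n : ℕ} (w : Fin n → Fin k) :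
    wordDes w = ∑ i : Fin n,
      (if ∃ h : (i : ℕ) + 1 < n, w ⟨(i : ℕ) + 1, h⟩ < w i then 1 else 0) := by
  classical
  rw [wordDes, Nat.card_eq_fintype_card, Fintype.card_subtype, Finset.card_filter]

lemma wordDes_zero (w : Fin 0 → Fin k) : wordDes w = 0 := by
  have : IsEmpty {i : Fin 0 // ∃ h : (i : ℕ) + 1 < 0, w ⟨(i : ℕ) + 1, h⟩ < w i} :=
    ⟨fun x => x.1.elim0⟩
  simp [wordDes, Nat.card_of_isEmpty]

lemma wordDes_succ {n : ℕ} (w : Fin (n+1) → Fin k) :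
    wordDes w = (if ∃ h : 1 < n + 1, w ⟨1, h⟩ < w 0 then 1 else 0)
      + wordDes (fun i => w i.succ) := by
  classical
  rw [wordDes_card, wordDes_card, Fin.sum_univ_succ]
  have h0 : (∃ h : (↑(0 : Fin (n+1)) : ℕ) + 1 < n + 1,
        w ⟨(↑(0 : Fin (n+1)) : ℕ) + 1, h⟩ < w 0)
      ↔ (∃ h : 1 < n + 1, w ⟨1, h⟩ < w 0) := by
    constructor
    · rintro ⟨h, hlt⟩; exact ⟨h, hlt⟩
    · rintro ⟨h, hlt⟩; exact ⟨h, hlt⟩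
  have hs : ∀ j : Fin n,
      (∃ h : (↑(j.succ) : ℕ) + 1 < n + 1, w ⟨(↑(j.succ) : ℕ) + 1, h⟩ < w j.succ)
      ↔ (∃ h : (j : ℕ) + 1 < n,
          w (Fin.succ (⟨(j : ℕ) + 1, h⟩ : Fin n)) < w j.succ) := by
    intro j
    constructor
    · rintro ⟨h, hlt⟩
      have h' : (j : ℕ) + 1 < n := by
        have h2 := h; rw [Fin.val_succ] at h2; omega
      exact ⟨h', hlt⟩
    · rintro ⟨h, hlt⟩
      have h' : (↑(j.succ) : ℕ) + 1 < n + 1 := by rw [Fin.val_succ]; omega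
      exact ⟨h', hlt⟩
  simp only [h0, hs]

lemma wordDes_eq_ldes {n : ℕ} (w : Fin n → Fin k) : wordDes w = ldes (List.ofFn w) := by
  induction n with
  | zero => simp [wordDes_zero, ldes]
  | succ n ih =>
    rw [wordDes_succ, List.ofFn_succ, ih]
    cases n with
    | zero =>
      have hfalse : ¬ ∃ h : 1 < 0 + 1, w ⟨1, h⟩ < w 0 := by rintro ⟨h, -⟩; omega
      rw [if_neg hfalse]
      simp [ldes]
    | succ m =>
      rw [List.ofFn_succ (f := fun i => w i.succ)]
      rw [show ldes (w 0 :: w (Fin.succ 0) :: List.ofFn fun i => w (Fin.succ i).succ)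
          = (if w (Fin.succ 0) < w 0 then 1 else 0)
            + ldes (w (Fin.succ 0) :: List.ofFn fun i => w (Fin.succ i).succ) from rfl]
      rw [← List.ofFn_succ (f := fun i => w i.succ)]
      congr 1
      have hcond : (∃ h : 1 < m + 1 + 1, w ⟨1, h⟩ < w 0) ↔ w (Fin.succ 0) < w 0 := by
        constructor
        · rintro ⟨h, hlt⟩; exact hlt
        · intro hlt; exact ⟨by omega, hlt⟩
      simp only [hcond]

lemma wordSum_eq_lsum {n : ℕ} (w : Fin n → Fin k) : wordSum w = lsum (List.ofFn w) := by
  rw [lsum, List.map_ofFn, List.sum_ofFn]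
  rfl

lemma dec_pairwise {l : List (Fin k)} (h : Dec l) : l.Pairwise (· > ·) :=
  List.isChain_iff_pairwise.1 h

lemma lt_map_pairwise {l : List (Fin k)} (h : Dec l) : (l.map Fin.val).Pairwise (· > ·) := by
  refine List.Pairwise.map Fin.val ?_ (dec_pairwise h)
  intro a b hab
  exact hab

lemma dec_nodup {l : List (Fin k)} (h : Dec l) : (l.map Fin.val).Nodup := by
  refine List.Pairwise.imp ?_ (lt_map_pairwise h)
  intro a b hab
  exact Nat.ne_of_gt hab

/-- bridge: decreasing words of length `j` correspond to `j`-subsets of `range k` -/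
lemma bridge (j : ℕ) :
    (∑ l ∈ W k j, if Dec l then (qvar : MvPolynomial (Fin 2) ℤ) ^ lsum l else 0)
      = ∑ S ∈ powersetCard j (range k), qvar ^ (S.sum id) := by
  classical
  rw [← Finset.sum_filter]
  refine Finset.sum_bij' (fun l _ => (l.map Fin.val).toFinset)
    (fun S hS => List.ofFn (fun t : Fin j =>
      (⟨S.orderEmbOfFin (Finset.mem_powersetCard.1 hS).2 t.rev,
        Finset.mem_range.1 ((Finset.mem_powersetCard.1 hS).1
          (Finset.orderEmbOfFin_mem S (Finset.mem_powersetCard.1 hS).2 t.rev))⟩ : Fin k)))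
    ?_ ?_ ?_ ?_ ?_
  · intro l hl
    obtain ⟨hW, hd⟩ := Finset.mem_filter.1 hl
    refine Finset.mem_powersetCard.2 ⟨?_, ?_⟩
    · intro x hx
      obtain ⟨a, _, rfl⟩ := List.mem_map.1 (List.mem_toFinset.1 hx)
      exact Finset.mem_range.2 a.isLt
    · rw [List.toFinset_card_of_nodup (dec_nodup hd), List.length_map, mem_W.1 hW]
  · intro S hS
    set h2 := (Finset.mem_powersetCard.1 hS).2 with h2def
    refine Finset.mem_filter.2 ⟨mem_W.2 (by simp), ?_⟩
    refine List.isChain_iff_pairwise.2 (List.pairwise_ofFn.2 ?_)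
    intro a b hab
    simp only [gt_iff_lt, Fin.mk_lt_mk]
    exact (S.orderEmbOfFin h2).strictMono (Fin.rev_lt_rev.2 hab)
  · intro l hl
    obtain ⟨hW, hd⟩ := Finset.mem_filter.1 hl
    have hlen : l.length = j := mem_W.1 hW
    have hmllen : (l.map Fin.val).length = j := by rw [List.length_map, hlen]
    have hnd := dec_nodup hd
    have h2 : (l.map Fin.val).toFinset.card = j := by
      rw [List.toFinset_card_of_nodup hnd, hmllen]
    have hpml : (l.map Fin.val).Pairwise (· > ·) := lt_map_pairwise hd
    set ml := l.map Fin.val with hml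
    set f : Fin j → ℕ := fun t => ml[(t.rev : ℕ)]'(by rw [hmllen]; exact t.rev.isLt) with hf
    have hmono : StrictMono f := by
      intro t t' htt
      exact (List.pairwise_iff_getElem.1 hpml _ _ _ _ (Fin.rev_lt_rev.2 htt))
    have hfs : ∀ x, f x ∈ ml.toFinset := fun x => List.mem_toFinset.2 (List.getElem_mem _)
    have huniq : f = ml.toFinset.orderEmbOfFin h2 :=
      Finset.orderEmbOfFin_unique h2 hfs hmono
    apply List.ext_getElem (by simp [hlen])
    intro i hi1 hi2
    have hij : i < j := by rw [hlen] at hi2; exact hi2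
    rw [List.getElem_ofFn]
    apply Fin.ext
    show (ml.toFinset.orderEmbOfFin h2) (Fin.rev ⟨i, hij⟩) = (l[i]).val
    rw [← congrFun huniq (Fin.rev ⟨i, hij⟩), hf]
    simp only [Fin.rev_rev]
    simp [hml]
  · intro S hS
    set h2 := (Finset.mem_powersetCard.1 hS).2 with h2def
    ext a
    rw [List.mem_toFinset, List.map_ofFn]
    constructor
    · intro ha
      obtain ⟨t, rfl⟩ := List.mem_ofFn.1 ha
      exact Finset.orderEmbOfFin_mem S h2 _
    · intro ha
      have : a ∈ Set.range (S.orderEmbOfFin h2) := by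
        rw [Finset.range_orderEmbOfFin]; exact ha
      obtain ⟨t, ht⟩ := this
      refine List.mem_ofFn.2 ⟨t.rev, ?_⟩
      show (S.orderEmbOfFin h2 t.rev.rev : ℕ) = a
      rw [Fin.rev_rev]; exact ht
  · intro l hl
    obtain ⟨hW, hd⟩ := Finset.mem_filter.1 hl
    congr 1
    rw [List.sum_toFinset _ (dec_nodup hd), List.map_id, lsum]

lemma lsum_append (u v : List (Fin k)) : lsum (u ++ v) = lsum u + lsum v := by
  simp [lsum]

/-- `A k n` : the descent-sum polynomial over words of length `n` -/
noncomputable def A (k n : ℕ) : R :=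
  ∑ l ∈ W k n, (xvar : MvPolynomial (Fin 2) ℤ) ^ ldes l * qvar ^ lsum l

/-- `E k j` : the elementary symmetric sum -/
noncomputable def E (k j : ℕ) : R := ∑ S ∈ powersetCard j (range k), qvar ^ (S.sum id)

lemma A_zero : A k 0 = 1 := by
  have hW : W k 0 = {([] : List (Fin k))} := by
    ext l; simp [mem_W, List.length_eq_zero_iff]
  rw [A, hW]
  simp [lsum]

lemma A_eq (n : ℕ) :
    (∑ w : Fin n → Fin k, (xvar : MvPolynomial (Fin 2) ℤ) ^ wordDes w * qvar ^ wordSum w)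
      = A k n := by
  rw [A, sum_W_eq]
  exact Finset.sum_congr rfl fun w _ => by rw [wordDes_eq_ldes, wordSum_eq_lsum]

lemma ML (n : ℕ) (hn : n ≠ 0) :
    A k n = ∑ i ∈ range n, (xvar - 1)^i * E k (i+1) * A k (n - (i+1)) := by
  classical
  simp only [A, E]
  have stepA : ∀ l ∈ W k n,
      (xvar : MvPolynomial (Fin 2) ℤ) ^ ldes l * qvar ^ lsum l
      = ∑ i ∈ range n, (if Dec (l.take (i+1))
          then (xvar - 1)^i * xvar ^ ldes (l.drop (i+1)) * qvar ^ lsum l else 0) := by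
    intro l hl
    have hlen : l.length = n := mem_W.1 hl
    have hne : l ≠ [] := by intro h; subst h; simp at hlen; omega
    obtain ⟨a, t, rfl⟩ := List.exists_cons_of_ne_nil hne
    rw [← hlen, ← fiber t a, Finset.sum_mul]
    refine Finset.sum_congr rfl fun i _ => ?_
    split <;> ring
  rw [Finset.sum_congr rfl stepA, Finset.sum_comm]
  refine Finset.sum_congr rfl fun i hi => ?_
  have hi' : i + 1 ≤ n := Finset.mem_range.1 hi
  have stepB : ∑ l ∈ W k n, (if Dec (l.take (i+1))
        then (xvar - 1)^i * xvar ^ ldes (l.drop (i+1)) * qvar ^ lsum l else 0)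
      = ∑ p ∈ (W k (i+1)) ×ˢ (W k (n - (i+1))),
          (if Dec p.1 then (xvar - 1)^i * qvar ^ lsum p.1 else 0)
            * (xvar ^ ldes p.2 * qvar ^ lsum p.2) := by
    refine Finset.sum_bij' (fun l _ => (l.take (i+1), l.drop (i+1)))
      (fun p _ => p.1 ++ p.2) ?_ ?_ ?_ ?_ ?_
    · intro l hl
      have hlen : l.length = n := mem_W.1 hl
      refine Finset.mem_product.2 ⟨mem_W.2 ?_, mem_W.2 ?_⟩
      · rw [List.length_take, hlen]; omega
      · rw [List.length_drop, hlen]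
    · rintro ⟨u, v⟩ hp
      obtain ⟨h1, h2⟩ := Finset.mem_product.1 hp
      refine mem_W.2 ?_
      rw [List.length_append, mem_W.1 h1, mem_W.1 h2]; omega
    · intro l _; exact List.take_append_drop _ _
    · rintro ⟨u, v⟩ hp
      obtain ⟨h1, h2⟩ := Finset.mem_product.1 hp
      have hu : u.length = i + 1 := mem_W.1 h1
      have e1 : (u ++ v).take (i+1) = u := by rw [← hu, List.take_left]
      have e2 : (u ++ v).drop (i+1) = v := by rw [← hu, List.drop_left]
      simp only [e1, e2]
    · intro l hl
      have hsplit : lsum l = lsum (l.take (i+1)) + lsum (l.drop (i+1)) := by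
        rw [← lsum_append, List.take_append_drop]
      rw [hsplit]
      split
      · ring
      · simp
  rw [stepB, Finset.sum_product, mul_assoc]
  dsimp only
  rw [show (∑ x ∈ W k (i+1), ∑ y ∈ W k (n-(i+1)),
      (if Dec x then (xvar - 1)^i * qvar ^ lsum x else 0) * (xvar ^ ldes y * qvar ^ lsum y))
      = (∑ x ∈ W k (i+1), if Dec x then (xvar - 1)^i * qvar ^ lsum x else 0)
        * ∑ y ∈ W k (n-(i+1)), xvar ^ ldes y * qvar ^ lsum y from (Finset.sum_mul_sum _ _ _ _).symm]
  have hg1 : (∑ u ∈ W k (i+1),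
        if Dec u then (xvar - 1)^i * qvar ^ lsum u else 0)
      = (xvar - 1)^i * ∑ S ∈ powersetCard (i+1) (range k), qvar ^ (S.sum id) := by
    rw [← bridge (k := k) (i+1), Finset.mul_sum]
    refine Finset.sum_congr rfl fun u _ => ?_
    split
    · ring
    · simp
  rw [hg1, mul_assoc]

/-- the q-Pochhammer product as a power series -/
noncomputable def P (k : ℕ) : PowerSeries R :=
  ∏ i ∈ Finset.range k, (1 - (PowerSeries.X - PowerSeries.X * PowerSeries.C xvar)
    * PowerSeries.C (qvar ^ i))

lemma prodP : P k = ∑ S ∈ (range k).powerset,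
    (PowerSeries.X : PowerSeries R)^S.card
      * PowerSeries.C ((xvar - 1)^S.card * qvar ^ (S.sum id)) := by
  have factor : ∀ i ∈ range k,
      (1 - (PowerSeries.X - PowerSeries.X * PowerSeries.C xvar) * PowerSeries.C (qvar ^ i))
      = (PowerSeries.X * PowerSeries.C ((xvar - 1) * qvar ^ i) + 1) := by
    intro i _
    rw [map_mul, map_sub, map_one]
    ring
  rw [P, Finset.prod_congr rfl factor, Finset.prod_add]
  refine Finset.sum_congr rfl fun S hS => ?_
  rw [Finset.prod_const_one, mul_one, Finset.prod_mul_distrib, Finset.prod_const,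
    ← map_prod, Finset.prod_mul_distrib, Finset.prod_const, Finset.prod_pow_eq_pow_sum]
  rfl

lemma coeffP (n : ℕ) : PowerSeries.coeff n (P k) = (xvar - 1)^n * E k n := by
  rw [prodP, map_sum]
  have step : ∀ S ∈ (range k).powerset,
      PowerSeries.coeff n ((PowerSeries.X : PowerSeries R)^S.card
        * PowerSeries.C ((xvar - 1)^S.card * qvar ^ (S.sum id)))
      = if S.card = n then (xvar - 1)^n * qvar ^ (S.sum id) else 0 := by
    intro S _
    rw [PowerSeries.coeff_mul_C, PowerSeries.coeff_X_pow]
    by_cases h : S.card = n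
    · simp [h]
    · have h' : ¬ n = S.card := fun hh => h hh.symm
      simp [h, h']
  rw [Finset.sum_congr rfl step, ← Finset.sum_filter, E, Finset.mul_sum,
    powersetCard_eq_filter]

lemma E_zero : E k 0 = 1 := by simp [E]

theorem main (k : ℕ) :
    (PowerSeries.mk fun n => A k n) * (PowerSeries.C xvar - P k)
      = PowerSeries.C (xvar - 1) := by
  have hc0 : PowerSeries.coeff 0 (PowerSeries.C xvar - P k) = xvar - 1 := by
    rw [map_sub, coeffP]
    simp [E_zero]
  have hcpos : ∀ j, j ≠ 0 → PowerSeries.coeff j (PowerSeries.C xvar - P k)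
      = -((xvar - 1)^j * E k j) := by
    intro j hj
    rw [map_sub, coeffP, PowerSeries.coeff_C, if_neg hj, zero_sub]
  ext n
  rw [PowerSeries.coeff_mul, Finset.Nat.sum_antidiagonal_eq_sum_range_succ_mk]
  cases n with
  | zero =>
    rw [Finset.sum_range_one, PowerSeries.coeff_mk, A_zero, hc0]
    simp
  | succ m =>
    rw [Finset.sum_range_succ, Nat.sub_self, hc0, PowerSeries.coeff_mk]
    have hrest : ∀ i ∈ range (m+1),
        (PowerSeries.coeff i) (PowerSeries.mk fun j => A k j)
          * PowerSeries.coeff (m+1-i) (PowerSeries.C xvar - P k)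
        = -((xvar-1)^(m+1-i) * E k (m+1-i) * A k i) := by
      intro i hi
      have hne : m + 1 - i ≠ 0 := by have := Finset.mem_range.1 hi; omega
      rw [PowerSeries.coeff_mk, hcpos _ hne]
      ring
    rw [Finset.sum_congr rfl hrest]
    have hML := ML (k := k) (m+1) (by omega)
    have hrefl := Finset.sum_range_reflect
      (fun i => (xvar - 1)^(i+1) * E k (i+1) * A k (m+1 - (i+1))) (m+1)
    have hAx : A k (m+1) * (xvar - 1)
        = ∑ i ∈ range (m+1), (xvar-1)^(m+1-i) * E k (m+1-i) * A k i := by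
      rw [hML, Finset.sum_mul]
      have h1 : ∑ i ∈ range (m+1), (xvar - 1)^i * E k (i+1) * A k (m+1-(i+1)) * (xvar - 1)
          = ∑ i ∈ range (m+1), (xvar - 1)^(i+1) * E k (i+1) * A k (m+1-(i+1)) :=
        Finset.sum_congr rfl fun i _ => by ring
      rw [h1, ← hrefl]
      refine Finset.sum_congr rfl fun j hj => ?_
      have hj' := Finset.mem_range.1 hj
      have e1 : m + 1 - 1 - j + 1 = m + 1 - j := by omega
      have e2 : m + 1 - (m + 1 - j) = j := by omega
      simp only [e1, e2]
    rw [hAx, ← Finset.sum_add_distrib, PowerSeries.coeff_C]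
    simp

end WordGF

open PowerSeries in
/-- Remmel's generating function for descents and sums over words in `{0, …, k-1}ⁿ`:
`∑_{n≥0} zⁿ ∑_{w ∈ {0,…,k-1}ⁿ} x^{des w} q^{sum w} = (x-1)/(x - (z - zx; q)_k)`,
stated in cross-multiplied form as formal power series in `z` over `ℤ[x,q]`, where
`(a; q)_k = ∏_{i=0}^{k-1} (1 - a qⁱ)` is the `q`-Pochhammer symbol. -/
theorem word_descent_gf (k : ℕ) :
    (PowerSeries.mk fun n => ∑ w : Fin n → Fin k, xvar ^ wordDes w * qvar ^ wordSum w) *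
      (C xvar - ∏ i ∈ Finset.range k,
        (1 - (PowerSeries.X - PowerSeries.X * C xvar) * C (qvar ^ i)))
    = C (xvar - 1) := by
  simp only [WordGF.A_eq]
  exact WordGF.main k
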